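/- Let r, T > 0, a > 0, and set γ = √(2(r + 1/T)). A twice continuously differentiable even function J : (−a, a) → ℝ satisfies the ordinary differential equation ½ J''(x) − (r + 1/T) J(x) = −|x|/T for all x ∈ (−a, a) if and only if there exists ξ ∈ ℝ such that J(x) = ξ cosh(γ x) + |x|/(rT+1) + e^{−γ|x|}/(γ(rT+1)) for all x ∈ (−a, a). -/

import Mathlib

open Real Set

noncomputable def EvS.br (ξ γ c s : ℝ) : ℝ → ℝ :=
  fun y => ξ * Real.cosh (γ * y) + ((s / c) * y + Real.exp (-(γ * (s * y))) / (γ * c))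

noncomputable def EvS.dbr (ξ γ c s : ℝ) : ℝ → ℝ :=
  fun y => ξ * (Real.sinh (γ * y) * γ)
    + (s / c + Real.exp (-(γ * (s * y))) * (-(γ * s)) / (γ * c))

noncomputable def EvS.F (ξ γ c : ℝ) : ℝ → ℝ :=
  fun x => ξ * Real.cosh (γ * x) + |x| / c + Real.exp (-(γ * |x|)) / (γ * c)

noncomputable def EvS.G (ξ γ c : ℝ) : ℝ → ℝ :=
  fun x => ξ * (Real.sinh (γ * x) * γ) + Real.sign x * (1 - Real.exp (-(γ * |x|))) / c

noncomputable def EvS.H (ξ γ c : ℝ) : ℝ → ℝ :=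
  fun x => ξ * (Real.cosh (γ * x) * γ * γ) + γ * Real.exp (-(γ * |x|)) / c

lemma EvS.br_hasDerivAt (ξ γ c s x : ℝ) :
    HasDerivAt (EvS.br ξ γ c s) (EvS.dbr ξ γ c s x) x := by
  have h1 : HasDerivAt (fun y : ℝ => γ * y) γ x := by
    simpa using (hasDerivAt_id x).const_mul γ
  have h2 : HasDerivAt (fun y : ℝ => -(γ * (s * y))) (-(γ * s)) x := by
    have : HasDerivAt (fun y : ℝ => (γ * s) * y) (γ * s) x := by
      simpa using (hasDerivAt_id x).const_mul (γ * s)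
    simpa [mul_assoc] using this.fun_neg
  have hc : HasDerivAt (fun y : ℝ => Real.cosh (γ * y)) (Real.sinh (γ * x) * γ) x := by
    simpa [Function.comp_def] using (Real.hasDerivAt_cosh (γ * x)).comp x h1
  have hl : HasDerivAt (fun y : ℝ => (s / c) * y) (s / c) x := by
    simpa using (hasDerivAt_id x).const_mul (s / c)
  have he : HasDerivAt (fun y : ℝ => Real.exp (-(γ * (s * y))))
      (Real.exp (-(γ * (s * x))) * (-(γ * s))) x := by
    simpa [Function.comp_def] using (Real.hasDerivAt_exp (-(γ * (s * x)))).comp x h2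
  exact (hc.const_mul ξ).add (hl.add (he.div_const (γ * c)))

lemma EvS.dbr_hasDerivAt (ξ γ c s x : ℝ) :
    HasDerivAt (EvS.dbr ξ γ c s)
      (ξ * (Real.cosh (γ * x) * γ * γ)
        + Real.exp (-(γ * (s * x))) * (-(γ * s)) * (-(γ * s)) / (γ * c)) x := by
  have h1 : HasDerivAt (fun y : ℝ => γ * y) γ x := by
    simpa using (hasDerivAt_id x).const_mul γ
  have h2 : HasDerivAt (fun y : ℝ => -(γ * (s * y))) (-(γ * s)) x := by
    have : HasDerivAt (fun y : ℝ => (γ * s) * y) (γ * s) x := by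
      simpa using (hasDerivAt_id x).const_mul (γ * s)
    simpa [mul_assoc] using this.fun_neg
  have hs : HasDerivAt (fun y : ℝ => Real.sinh (γ * y) * γ) (Real.cosh (γ * x) * γ * γ) x := by
    have := ((Real.hasDerivAt_sinh (γ * x)).comp x h1).mul_const γ
    simpa [Function.comp_def] using this
  have he : HasDerivAt (fun y : ℝ => Real.exp (-(γ * (s * y))) * (-(γ * s)))
      (Real.exp (-(γ * (s * x))) * (-(γ * s)) * (-(γ * s))) x :=
    ((Real.hasDerivAt_exp (-(γ * (s * x)))).comp x h2).mul_const _
  exact (hs.const_mul ξ).add ((he.div_const (γ * c)).const_add (s / c))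

lemma EvS.F_eq_br_pos (ξ γ c : ℝ) : ∀ y ∈ Ici (0:ℝ), EvS.F ξ γ c y = EvS.br ξ γ c 1 y := by
  intro y hy
  simp only [EvS.F, EvS.br, abs_of_nonneg (mem_Ici.1 hy), one_mul, one_div]
  ring

lemma EvS.F_eq_br_neg (ξ γ c : ℝ) : ∀ y ∈ Iic (0:ℝ), EvS.F ξ γ c y = EvS.br ξ γ c (-1) y := by
  intro y hy
  simp only [EvS.F, EvS.br, abs_of_nonpos (mem_Iic.1 hy)]
  ring_nf

lemma EvS.G_eq_dbr_pos (ξ : ℝ) {γ c : ℝ} (hγ : γ ≠ 0) (hc : c ≠ 0) :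
    ∀ y ∈ Ici (0:ℝ), EvS.G ξ γ c y = EvS.dbr ξ γ c 1 y := by
  intro y hy
  rcases eq_or_lt_of_le (mem_Ici.1 hy) with h | h
  · simp only [EvS.G, EvS.dbr, ← h, Real.sign_zero, abs_zero, mul_zero, neg_zero,
      Real.sinh_zero, Real.exp_zero, zero_mul, one_mul]
    field_simp
    ring
  · simp only [EvS.G, EvS.dbr, Real.sign_of_pos h, abs_of_pos h, one_mul]
    field_simp
    ring

lemma EvS.G_eq_dbr_neg (ξ : ℝ) {γ c : ℝ} (hγ : γ ≠ 0) (hc : c ≠ 0) :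
    ∀ y ∈ Iic (0:ℝ), EvS.G ξ γ c y = EvS.dbr ξ γ c (-1) y := by
  intro y hy
  rcases eq_or_lt_of_le (mem_Iic.1 hy) with h | h
  · simp only [EvS.G, EvS.dbr, h, Real.sign_zero, abs_zero, mul_zero, neg_zero,
      Real.sinh_zero, Real.exp_zero, zero_mul, one_mul]
    field_simp
    ring
  · simp only [EvS.G, EvS.dbr, Real.sign_of_neg h, abs_of_neg h]
    field_simp
    ring

lemma EvS.F_hasDerivAt (ξ : ℝ) {γ c : ℝ} (hγ : γ ≠ 0) (hc : c ≠ 0) (x : ℝ) :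
    HasDerivAt (EvS.F ξ γ c) (EvS.G ξ γ c x) x := by
  rcases lt_trichotomy x 0 with hx | hx | hx
  · have hev : EvS.F ξ γ c =ᶠ[nhds x] EvS.br ξ γ c (-1) :=
      Filter.eventually_of_mem (isOpen_Iio.mem_nhds hx)
        (fun y hy => EvS.F_eq_br_neg ξ γ c y (mem_Iic.2 (le_of_lt hy)))
    have h := (EvS.br_hasDerivAt ξ γ c (-1) x).congr_of_eventuallyEq hev
    rw [EvS.G_eq_dbr_neg ξ hγ hc x (mem_Iic.2 (le_of_lt hx))]; exact h
  · subst hx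
    have h1 : HasDerivWithinAt (EvS.F ξ γ c) (EvS.dbr ξ γ c 1 0) (Ici 0) 0 :=
      (EvS.br_hasDerivAt ξ γ c 1 0).hasDerivWithinAt.congr
        (EvS.F_eq_br_pos ξ γ c) (EvS.F_eq_br_pos ξ γ c 0 (mem_Ici.2 le_rfl))
    have h2 : HasDerivWithinAt (EvS.F ξ γ c) (EvS.dbr ξ γ c (-1) 0) (Iic 0) 0 :=
      (EvS.br_hasDerivAt ξ γ c (-1) 0).hasDerivWithinAt.congr
        (EvS.F_eq_br_neg ξ γ c) (EvS.F_eq_br_neg ξ γ c 0 (mem_Ici.2 le_rfl))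
    rw [← EvS.G_eq_dbr_pos ξ hγ hc 0 (mem_Ici.2 le_rfl)] at h1
    rw [← EvS.G_eq_dbr_neg ξ hγ hc 0 (mem_Iic.2 le_rfl)] at h2
    have := h2.union h1
    rw [Iic_union_Ici] at this
    exact hasDerivWithinAt_univ.1 this
  · have hev : EvS.F ξ γ c =ᶠ[nhds x] EvS.br ξ γ c 1 :=
      Filter.eventually_of_mem (isOpen_Ioi.mem_nhds hx)
        (fun y hy => EvS.F_eq_br_pos ξ γ c y (mem_Ici.2 (le_of_lt hy)))
    have h := (EvS.br_hasDerivAt ξ γ c 1 x).congr_of_eventuallyEq hev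
    rw [EvS.G_eq_dbr_pos ξ hγ hc x (mem_Ici.2 (le_of_lt hx))]; exact h

lemma EvS.dbr2_eq_H_pos (ξ : ℝ) {γ c : ℝ} (hγ : γ ≠ 0) (hc : c ≠ 0) (x : ℝ) (hx : 0 ≤ x) :
    ξ * (Real.cosh (γ * x) * γ * γ)
        + Real.exp (-(γ * (1 * x))) * (-(γ * 1)) * (-(γ * 1)) / (γ * c)
      = EvS.H ξ γ c x := by
  simp only [EvS.H, one_mul, abs_of_nonneg hx]
  field_simp

lemma EvS.dbr2_eq_H_neg (ξ : ℝ) {γ c : ℝ} (hγ : γ ≠ 0) (hc : c ≠ 0) (x : ℝ) (hx : x ≤ 0) :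
    ξ * (Real.cosh (γ * x) * γ * γ)
        + Real.exp (-(γ * (-1 * x))) * (-(γ * -1)) * (-(γ * -1)) / (γ * c)
      = EvS.H ξ γ c x := by
  simp only [EvS.H, abs_of_nonpos hx]
  have : -(γ * (-1 * x)) = -(γ * -x) := by ring
  rw [this]
  field_simp

lemma EvS.G_hasDerivAt (ξ : ℝ) {γ c : ℝ} (hγ : γ ≠ 0) (hc : c ≠ 0) (x : ℝ) :
    HasDerivAt (EvS.G ξ γ c) (EvS.H ξ γ c x) x := by
  rcases lt_trichotomy x 0 with hx | hx | hx
  · have hev : EvS.G ξ γ c =ᶠ[nhds x] EvS.dbr ξ γ c (-1) :=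
      Filter.eventually_of_mem (isOpen_Iio.mem_nhds hx)
        (fun y hy => EvS.G_eq_dbr_neg ξ hγ hc y (mem_Iic.2 (le_of_lt hy)))
    have h := (EvS.dbr_hasDerivAt ξ γ c (-1) x).congr_of_eventuallyEq hev
    rw [← EvS.dbr2_eq_H_neg ξ hγ hc x (le_of_lt hx)]; exact h
  · subst hx
    have h1 : HasDerivWithinAt (EvS.G ξ γ c) (EvS.H ξ γ c 0) (Ici 0) 0 := by
      have := (EvS.dbr_hasDerivAt ξ γ c 1 0).hasDerivWithinAt.congr
        (EvS.G_eq_dbr_pos ξ hγ hc) (EvS.G_eq_dbr_pos ξ hγ hc 0 (mem_Ici.2 le_rfl))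
      rwa [EvS.dbr2_eq_H_pos ξ hγ hc 0 le_rfl] at this
    have h2 : HasDerivWithinAt (EvS.G ξ γ c) (EvS.H ξ γ c 0) (Iic 0) 0 := by
      have := (EvS.dbr_hasDerivAt ξ γ c (-1) 0).hasDerivWithinAt.congr
        (EvS.G_eq_dbr_neg ξ hγ hc) (EvS.G_eq_dbr_neg ξ hγ hc 0 (mem_Iic.2 le_rfl))
      rwa [EvS.dbr2_eq_H_neg ξ hγ hc 0 le_rfl] at this
    have := h2.union h1
    rw [Iic_union_Ici] at this
    exact hasDerivWithinAt_univ.1 this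
  · have hev : EvS.G ξ γ c =ᶠ[nhds x] EvS.dbr ξ γ c 1 :=
      Filter.eventually_of_mem (isOpen_Ioi.mem_nhds hx)
        (fun y hy => EvS.G_eq_dbr_pos ξ hγ hc y (mem_Ici.2 (le_of_lt hy)))
    have h := (EvS.dbr_hasDerivAt ξ γ c 1 x).congr_of_eventuallyEq hev
    rw [← EvS.dbr2_eq_H_pos ξ hγ hc x (le_of_lt hx)]; exact h

lemma EvS.deriv2_F (ξ : ℝ) {γ c : ℝ} (hγ : γ ≠ 0) (hc : c ≠ 0) (x : ℝ) :
    deriv (deriv (EvS.F ξ γ c)) x = EvS.H ξ γ c x := by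
  have hdF : deriv (EvS.F ξ γ c) = EvS.G ξ γ c :=
    funext fun y => (EvS.F_hasDerivAt ξ hγ hc y).deriv
  rw [hdF]
  exact (EvS.G_hasDerivAt ξ hγ hc x).deriv

lemma EvS.br_ode (ξ : ℝ) {γ r T : ℝ} (hT : T ≠ 0) (hγ : γ ≠ 0)
    (hG : γ * γ * T = 2 * (r * T + 1)) (hc : r * T + 1 ≠ 0) (y : ℝ) :
    ξ * (Real.cosh (γ * y) * γ * γ)
      + Real.exp (-(γ * (1 * y))) * (-(γ * 1)) * (-(γ * 1)) / (γ * (r * T + 1))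
    = γ * γ * EvS.br ξ γ (r * T + 1) 1 y - 2 * y / T := by
  simp only [EvS.br, one_mul]
  field_simp
  linear_combination (-y) * hG

lemma EvS.H_ode (ξ : ℝ) {γ r T : ℝ} (hT : T ≠ 0) (hγ : γ ≠ 0)
    (hG : γ * γ * T = 2 * (r * T + 1)) (hc : r * T + 1 ≠ 0) (x : ℝ) :
    (1/2) * EvS.H ξ γ (r * T + 1) x - (r + 1 / T) * EvS.F ξ γ (r * T + 1) x = -|x| / T := by
  simp only [EvS.F, EvS.H]
  field_simp
  linear_combination (ξ*γ*Real.cosh (γ*x)*(r*T+1) + Real.exp (-(γ*|x|))) * hG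
/-- Let r, T > 0, a > 0 and γ = √(2(r + 1/T)). A twice
continuously differentiable even function J on (−a, a) satisfies
½ J''(x) − (r + 1/T) J(x) = −|x|/T on (−a, a) if and only if there exists
ξ ∈ ℝ with J(x) = ξ cosh(γx) + |x|/(rT+1) + e^{−γ|x|}/(γ(rT+1)) on (−a, a). -/
theorem even_solutions_of_randomization_ODE
    (r T a : ℝ) (hr : 0 < r) (hT : 0 < T) (ha : 0 < a)
    (γ : ℝ) (hγ : γ = Real.sqrt (2 * (r + 1 / T)))
    (J : ℝ → ℝ)
    (hJ_smooth : ContDiffOn ℝ 2 J (Set.Ioo (-a) a))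
    (hJ_even : ∀ x ∈ Set.Ioo (-a) a, J (-x) = J x) :
    (∀ x ∈ Set.Ioo (-a) a,
        (1 / 2) * deriv (deriv J) x - (r + 1 / T) * J x = -|x| / T)
      ↔ ∃ ξ : ℝ, ∀ x ∈ Set.Ioo (-a) a,
        J x = ξ * Real.cosh (γ * x) + |x| / (r * T + 1)
          + Real.exp (-(γ * |x|)) / (γ * (r * T + 1)) := by

  have hT0 : T ≠ 0 := ne_of_gt hT
  have hγpos : 0 < γ := by rw [hγ]; exact Real.sqrt_pos.2 (by positivity)
  have hγ0 : γ ≠ 0 := ne_of_gt hγpos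
  have hγγ : γ * γ = 2 * (r + 1 / T) := by
    rw [hγ]; exact Real.mul_self_sqrt (by positivity)
  have hG : γ * γ * T = 2 * (r * T + 1) := by rw [hγγ]; field_simp
  have hcpos : (0:ℝ) < r * T + 1 := by positivity
  have hc0 : r * T + 1 ≠ 0 := ne_of_gt hcpos
  have hs : IsOpen (Ioo (-a) a) := isOpen_Ioo
  constructor
  · intro hODE
    refine ⟨J 0 - 1 / (γ * (r * T + 1)), ?_⟩
    set ξ := J 0 - 1 / (γ * (r * T + 1)) with hξdef
    have h0mem : (0:ℝ) ∈ Ioo (-a) a := ⟨by linarith, ha⟩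
    have hJd : ∀ y ∈ Ioo (-a) a, HasDerivAt J (deriv J y) y := fun y hy =>
      ((hJ_smooth.differentiableOn (by norm_num)).differentiableAt (hs.mem_nhds hy)).hasDerivAt
    have hJd2 : ∀ y ∈ Ioo (-a) a, HasDerivAt (deriv J) (deriv (deriv J) y) y := by
      intro y hy
      have h1 : ContDiffOn ℝ 1 (deriv J) (Ioo (-a) a) :=
        hJ_smooth.deriv_of_isOpen hs (by norm_num)
      exact ((h1.differentiableOn (by norm_num)).differentiableAt (hs.mem_nhds hy)).hasDerivAt
    have hdJ0 : deriv J 0 = 0 := by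
      have hev : (fun x => J (-x)) =ᶠ[nhds 0] J :=
        Filter.eventually_of_mem (hs.mem_nhds h0mem) (fun y hy => hJ_even y hy)
      have h1 : deriv (fun x => J (-x)) 0 = deriv J 0 := hev.deriv_eq
      have h2 : deriv (fun x => J (-x)) 0 = -deriv J 0 := by
        rw [deriv_comp_neg]; norm_num
      linarith
    have key : ∀ x ∈ Ico 0 a, J x = EvS.br ξ γ (r * T + 1) 1 x := by
      rintro x ⟨hx0, hxa⟩
      set m := (x + a) / 2 with hm
      have hxm : x ≤ m := by rw [hm]; linarith
      have hma : m < a := by rw [hm]; linarith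
      have hsub : Icc (0:ℝ) m ⊆ Ioo (-a) a := fun y hy =>
        ⟨by linarith [hy.1], lt_of_le_of_lt hy.2 hma⟩
      set u : ℝ → ℝ := fun y => J y - EvS.br ξ γ (r * T + 1) 1 y with hu_def
      set U : ℝ → ℝ := fun y => deriv J y - EvS.dbr ξ γ (r * T + 1) 1 y with hU_def
      have hu : ∀ y ∈ Ioo (-a) a, HasDerivAt u (U y) y := fun y hy =>
        (hJd y hy).sub (EvS.br_hasDerivAt ξ γ (r * T + 1) 1 y)
      have hU : ∀ y ∈ Icc 0 m, HasDerivAt U (γ * γ * u y) y := by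
        intro y hy
        have hyio := hsub hy
        have hD : deriv (deriv J) y = γ * γ * J y - 2 * y / T := by
          have h := hODE y hyio
          rw [abs_of_nonneg hy.1] at h
          rw [hγγ]
          linear_combination 2 * h
        have hDd : HasDerivAt (deriv J) (γ * γ * J y - 2 * y / T) y := by
          rw [← hD]; exact hJd2 y hyio
        have hbr2 : HasDerivAt (EvS.dbr ξ γ (r * T + 1) 1)
            (γ * γ * EvS.br ξ γ (r * T + 1) 1 y - 2 * y / T) y := by
          have h := EvS.dbr_hasDerivAt ξ γ (r * T + 1) 1 y
          rwa [EvS.br_ode ξ hT0 hγ0 hG hc0 y] at h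
        have h := hDd.sub hbr2
        refine h.congr_deriv ?_
        simp only [hu_def]
        ring
      have hu0 : u 0 = 0 := by
        simp only [hu_def, EvS.br, hξdef, mul_zero, Real.cosh_zero, one_mul, neg_zero,
          Real.exp_zero]
        ring
      have hU0 : U 0 = 0 := by
        simp only [hU_def, EvS.dbr, hdJ0, mul_zero, Real.sinh_zero, zero_mul, one_mul, neg_zero,
          Real.exp_zero]
        field_simp
        ring
      set φ : ℝ → ℝ := fun y => Real.exp (γ * y) * (U y - γ * u y) with hφ_def
      have hφ : ∀ y ∈ Icc 0 m, HasDerivAt φ 0 y := by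
        intro y hy
        have hexp : HasDerivAt (fun z : ℝ => Real.exp (γ * z)) (Real.exp (γ * y) * γ) y := by
          have h1 : HasDerivAt (fun z : ℝ => γ * z) γ y := by
            simpa using (hasDerivAt_id y).const_mul γ
          simpa [Function.comp_def] using (Real.hasDerivAt_exp (γ * y)).comp y h1
        have hin : HasDerivAt (fun z => U z - γ * u z) (γ * γ * u y - γ * U y) y :=
          (hU y hy).sub ((hu y (hsub hy)).const_mul γ)
        have h := hexp.mul hin
        refine h.congr_deriv ?_
        ring
      have hφconst : ∀ y ∈ Icc 0 m, φ y = φ 0 :=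
        constant_of_has_deriv_right_zero
          (fun y hy => ((hφ y hy).continuousAt).continuousWithinAt)
          (fun y hy => (hφ y ⟨hy.1, le_of_lt hy.2⟩).hasDerivWithinAt)
      have hUu : ∀ y ∈ Icc 0 m, U y = γ * u y := by
        intro y hy
        have h := hφconst y hy
        simp only [hφ_def, hu0, hU0, mul_zero, sub_zero] at h
        have h2 : U y - γ * u y = 0 := by simpa using h
        linarith
      set χ : ℝ → ℝ := fun y => Real.exp (-(γ * y)) * u y with hχ_def
      have hχ : ∀ y ∈ Icc 0 m, HasDerivAt χ 0 y := by
        intro y hy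
        have hexp : HasDerivAt (fun z : ℝ => Real.exp (-(γ * z))) (Real.exp (-(γ * y)) * (-γ)) y := by
          have h1 : HasDerivAt (fun z : ℝ => -(γ * z)) (-γ) y := by
            have h0 : HasDerivAt (fun z : ℝ => γ * z) γ y := by
              simpa using (hasDerivAt_id y).const_mul γ
            simpa using h0.fun_neg
          simpa [Function.comp_def] using (Real.hasDerivAt_exp (-(γ * y))).comp y h1
        have h := hexp.mul (hu y (hsub hy))
        refine h.congr_deriv ?_
        rw [hUu y hy]
        ring
      have hχconst : ∀ y ∈ Icc 0 m, χ y = χ 0 :=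
        constant_of_has_deriv_right_zero
          (fun y hy => ((hχ y hy).continuousAt).continuousWithinAt)
          (fun y hy => (hχ y ⟨hy.1, le_of_lt hy.2⟩).hasDerivWithinAt)
      have hx' := hχconst x ⟨hx0, hxm⟩
      simp only [hχ_def, hu0, mul_zero] at hx'
      have hux : u x = 0 := by simpa using hx'
      have huJ : J x - EvS.br ξ γ (r * T + 1) 1 x = 0 := hux
      linarith
    intro x hx
    rcases le_or_gt 0 x with hx0 | hx0
    · have h1 := key x ⟨hx0, hx.2⟩
      have h2 := EvS.F_eq_br_pos ξ γ (r * T + 1) x (mem_Ici.2 hx0)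
      rw [h1, ← h2]
      simp only [EvS.F]
    · have hmem : -x ∈ Ico 0 a := ⟨by linarith, by linarith [hx.1]⟩
      have h1 := key (-x) hmem
      have h2 : J (-x) = J x := hJ_even x hx
      rw [← h2, h1]
      simp only [EvS.br, mul_neg, Real.cosh_neg, one_mul, abs_of_neg hx0, neg_neg]
      ring
  · rintro ⟨ξ, hξ⟩ x hx
    have hFx : J x = EvS.F ξ γ (r * T + 1) x := hξ x hx
    have hev : J =ᶠ[nhds x] EvS.F ξ γ (r * T + 1) :=
      Filter.eventually_of_mem (hs.mem_nhds hx) (fun y hy => hξ y hy)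
    have hdd : deriv (deriv J) x = EvS.H ξ γ (r * T + 1) x := by
      rw [Filter.EventuallyEq.deriv_eq hev.deriv]
      exact EvS.deriv2_F ξ hγ0 hc0 x
    rw [hdd, hFx]
    have h := EvS.H_ode ξ hT0 hγ0 hG hc0 x
    simp only [EvS.F, EvS.H] at h ⊢
    linarith
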